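/- Under the hypotheses of the maximum inequality (alternating projections x_{2n-1} = P_A(x_{2n-2}), x_{2n} = P_B(x_{2n-1}) between closed sets A, B with A ∩ B ≠ ∅, with projection maps satisfying d(z, P_C(x))² + c·d(x, P_C(x))² ≤ d(x,z)² for c ∈ (0,1)), one has max{d(x_n, A), d(x_n, B)} → 0 as n → ∞. -/

import Mathlib

theorem alternating_projections_max_dist_tendsto_zero {M : Type*} [MetricSpace M]
    (A B : Set M) (hA : A.Nonempty) (hB : B.Nonempty) (hAB : (A ∩ B).Nonempty)
    (hAclosed : IsClosed A) (hBclosed : IsClosed B)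
    (PA PB PAB : M → M) (c : ℝ) (hc0 : 0 < c) (hc1 : c < 1)
    (hPA_mem : ∀ x : M, PA x ∈ A) (hPB_mem : ∀ x : M, PB x ∈ B)
    (hPAB_mem : ∀ x : M, PAB x ∈ A ∩ B)
    (hPA_dist : ∀ x : M, dist x (PA x) = Metric.infDist x A)
    (hPB_dist : ∀ x : M, dist x (PB x) = Metric.infDist x B)
    (hPAB_dist : ∀ x : M, dist x (PAB x) = Metric.infDist x (A ∩ B))
    (hPA : ∀ x : M, ∀ z ∈ A, dist z (PA x) ^ 2 + c * dist x (PA x) ^ 2 ≤ dist x z ^ 2)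
    (hPB : ∀ x : M, ∀ z ∈ B, dist z (PB x) ^ 2 + c * dist x (PB x) ^ 2 ≤ dist x z ^ 2)
    (x : ℕ → M)
    (hodd : ∀ n : ℕ, x (2 * n + 1) = PA (x (2 * n)))
    (heven : ∀ n : ℕ, x (2 * n + 2) = PB (x (2 * n + 1))) :
    Filter.Tendsto (fun n => max (Metric.infDist (x n) A) (Metric.infDist (x n) B))
      Filter.atTop (nhds 0) := by
  set f : ℕ → ℝ := fun n => Metric.infDist (x n) (A ∩ B) with hf
  set g : ℕ → ℝ := fun n => max (Metric.infDist (x n) A) (Metric.infDist (x n) B) with hg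
  -- generic one-step estimate
  have key : ∀ (u : M) (P : M → M) (C : Set M), A ∩ B ⊆ C →
      (∀ z ∈ C, dist z (P u) ^ 2 + c * dist u (P u) ^ 2 ≤ dist u z ^ 2) →
      dist u (P u) = Metric.infDist u C →
      Metric.infDist (P u) (A ∩ B) ≤ Metric.infDist u (A ∩ B) ∧
      c * Metric.infDist u C ^ 2 ≤
        Metric.infDist u (A ∩ B) ^ 2 - Metric.infDist (P u) (A ∩ B) ^ 2 := by
    intro u P C hC hP hPd
    have hz : PAB u ∈ A ∩ B := hPAB_mem u
    have h1 := hP (PAB u) (hC hz)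
    have hdz : dist u (PAB u) = Metric.infDist u (A ∩ B) := hPAB_dist u
    have hle : Metric.infDist (P u) (A ∩ B) ≤ dist (PAB u) (P u) := by
      rw [dist_comm]; exact Metric.infDist_le_dist_of_mem hz
    have h0 : 0 ≤ Metric.infDist (P u) (A ∩ B) := Metric.infDist_nonneg
    have h0' : 0 ≤ Metric.infDist u (A ∩ B) := Metric.infDist_nonneg
    have hsq : Metric.infDist (P u) (A ∩ B) ^ 2 ≤ dist (PAB u) (P u) ^ 2 := by
      nlinarith
    have hcd : 0 ≤ c * dist u (P u) ^ 2 := by positivity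
    constructor
    · nlinarith
    · rw [← hPd]; nlinarith
  have mono : ∀ n, f (n + 1) ≤ f n := by
    intro n
    show Metric.infDist (x (n + 1)) (A ∩ B) ≤ Metric.infDist (x n) (A ∩ B)
    rcases Nat.even_or_odd n with ⟨k, hk⟩ | ⟨k, hk⟩
    · have h := (key (x (2 * k)) PA A Set.inter_subset_left (hPA _) (hPA_dist _)).1
      rw [← hodd k] at h
      have e1 : n = 2 * k := by omega
      have e2 : n + 1 = 2 * k + 1 := by omega
      rw [e1]; exact h
    · have h := (key (x (2 * k + 1)) PB B Set.inter_subset_right (hPB _) (hPB_dist _)).1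
      rw [← heven k] at h
      have e1 : n = 2 * k + 1 := by omega
      rw [e1]; exact h
  have hf0 : ∀ n, 0 ≤ f n := fun n => Metric.infDist_nonneg
  have bound : ∀ n, 1 ≤ n → c * g n ^ 2 ≤ f n ^ 2 - f (n + 1) ^ 2 := by
    intro n hn
    rcases Nat.even_or_odd n with ⟨k, hk⟩ | ⟨k, hk⟩
    · -- n even, n ≥ 2, so n = 2m+2, x n ∈ B
      have hk' : n = 2 * k := by omega
      obtain ⟨m, hm⟩ : ∃ m, k = m + 1 := ⟨k - 1, by omega⟩
      have hxB : x n ∈ B := by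
        rw [hk', hm, show 2 * (m + 1) = 2 * m + 2 from by ring, heven m]
        exact hPB_mem _
      have hB0 : Metric.infDist (x n) B = 0 :=
        (Metric.infDist_zero_of_mem hxB)
      have hgn : g n = Metric.infDist (x n) A := by
        simp [hg, hB0, Metric.infDist_nonneg]
      have h := (key (x (2 * k)) PA A Set.inter_subset_left (hPA _) (hPA_dist _)).2
      rw [← hodd k] at h
      have e2 : n + 1 = 2 * k + 1 := by omega
      show c * g n ^ 2 ≤ Metric.infDist (x n) (A ∩ B) ^ 2 - Metric.infDist (x (n + 1)) (A ∩ B) ^ 2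
      rw [hgn, e2, hk']; exact h
    · have hxA : x n ∈ A := by
        rw [hk, hodd k]; exact hPA_mem _
      have hA0 : Metric.infDist (x n) A = 0 := Metric.infDist_zero_of_mem hxA
      have hgn : g n = Metric.infDist (x n) B := by
        simp [hg, hA0, Metric.infDist_nonneg]
      have h := (key (x (2 * k + 1)) PB B Set.inter_subset_right (hPB _) (hPB_dist _)).2
      rw [← heven k] at h
      have e2 : n + 1 = 2 * k + 2 := by omega
      show c * g n ^ 2 ≤ Metric.infDist (x n) (A ∩ B) ^ 2 - Metric.infDist (x (n + 1)) (A ∩ B) ^ 2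
      rw [hgn, e2, hk]; exact h
  -- f^2 converges
  have hanti : Antitone (fun n => f n ^ 2) := by
    apply antitone_nat_of_succ_le
    intro n
    have := mono n
    have := hf0 (n + 1)
    nlinarith
  have hbdd : BddBelow (Set.range fun n => f n ^ 2) :=
    ⟨0, by rintro y ⟨n, rfl⟩; positivity⟩
  have hconv : Filter.Tendsto (fun n => f n ^ 2) Filter.atTop (nhds (⨅ n, f n ^ 2)) :=
    tendsto_atTop_ciInf hanti hbdd
  have hconv' : Filter.Tendsto (fun n => f (n + 1) ^ 2) Filter.atTop (nhds (⨅ n, f n ^ 2)) :=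
    hconv.comp (Filter.tendsto_add_atTop_nat 1)
  have hdiff : Filter.Tendsto (fun n => (f n ^ 2 - f (n + 1) ^ 2) / c) Filter.atTop (nhds 0) := by
    have := (hconv.sub hconv').div_const c
    simpa using this
  have hg2 : Filter.Tendsto (fun n => g n ^ 2) Filter.atTop (nhds 0) := by
    apply squeeze_zero' (g := fun n => (f n ^ 2 - f (n + 1) ^ 2) / c)
    · exact Filter.Eventually.of_forall fun n => by positivity
    · filter_upwards [Filter.eventually_ge_atTop 1] with n hn
      have := bound n hn
      rw [le_div_iff₀ hc0]
      linarith [bound n hn]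
    · exact hdiff
  have hgnn : ∀ n, 0 ≤ g n := fun n => le_max_of_le_left Metric.infDist_nonneg
  have : Filter.Tendsto (fun n => Real.sqrt (g n ^ 2)) Filter.atTop (nhds 0) := by
    have := (Real.continuous_sqrt.tendsto 0).comp hg2
    simpa [Function.comp_def] using this
  refine this.congr fun n => ?_
  exact Real.sqrt_sq (hgnn n)
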